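/- Let λ ∈ ℂ with |λ| < 1 and 0 < ε < 1, and consider the 2×2 matrices S = [[λ, 1−|λ|],[0, λ]] and T(ε) = [[λ, ε(1−|λ|)],[0, λ]]. If X is an invertible 2×2 complex matrix with X T(ε) = S X, then X is upper triangular of the form [[a, b],[0, εa]] with a ≠ 0, and consequently ‖X‖·‖X⁻¹‖ ≥ 1/ε. -/

import Mathlib

open Matrix

lemma coord_le_norm (v : EuclideanSpace ℂ (Fin 2)) (i : Fin 2) : ‖v i‖ ≤ ‖v‖ := by
  rw [EuclideanSpace.norm_eq]
  refine (Real.le_sqrt (norm_nonneg _) (by positivity)).mpr ?_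
  exact Finset.single_le_sum (f := fun j => ‖v j‖ ^ 2) (fun j _ => sq_nonneg _)
    (Finset.mem_univ i)

theorem stmt10 (l : ℂ) (hl : ‖l‖ < 1) (ε : ℝ) (hε0 : 0 < ε) (hε1 : ε < 1)
    (X : Matrix (Fin 2) (Fin 2) ℂ) (hX : IsUnit X)
    (hintw :
      X * !![l, (ε : ℂ) * (1 - (‖l‖ : ℂ)); 0, l] =
        !![l, 1 - (‖l‖ : ℂ); 0, l] * X) :
    ∃ a b : ℂ, a ≠ 0 ∧ X = !![a, b; 0, (ε : ℂ) * a] ∧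
      1 / ε ≤ ‖Matrix.toEuclideanCLM (𝕜 := ℂ) X‖ *
        ‖Matrix.toEuclideanCLM (𝕜 := ℂ) X⁻¹‖ := by
  have hm : (1 : ℂ) - (‖l‖ : ℂ) ≠ 0 := by
    intro h
    have h2 : (‖l‖ : ℂ) = 1 := by linear_combination -h
    have h3 := congrArg Complex.re h2
    simp at h3
    linarith
  have hεC : (ε : ℂ) ≠ 0 := by exact_mod_cast hε0.ne'
  have hintw2 := hintw
  rw [Matrix.eta_fin_two X] at hintw2
  have h00 := congrFun (congrFun hintw2 0) 0
  have h01 := congrFun (congrFun hintw2 0) 1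
  simp [Matrix.mul_apply, Fin.sum_univ_two] at h00 h01
  have hc0 : X 1 0 = 0 := by
    have h : ((1:ℂ) - (‖l‖ : ℂ)) * X 1 0 = 0 := by linear_combination -h00
    exact (mul_eq_zero.mp h).resolve_left hm
  have hd0 : X 1 1 = (ε : ℂ) * X 0 0 := by
    have h : ((1:ℂ) - (‖l‖ : ℂ)) * (X 1 1 - (ε:ℂ) * X 0 0) = 0 := by
      linear_combination -h01
    have := (mul_eq_zero.mp h).resolve_left hm
    linear_combination this
  set a := X 0 0 with ha
  set b := X 0 1 with hb
  have hXeq : X = !![a, b; 0, (ε : ℂ) * a] := by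
    rw [Matrix.eta_fin_two X, hc0, hd0]
  have ha0 : a ≠ 0 := by
    have hdet := (Matrix.isUnit_iff_isUnit_det X).mp hX
    rw [hXeq] at hdet
    simp [Matrix.det_fin_two_of] at hdet
    intro h
    rw [h] at hdet
    simp at hdet
  refine ⟨a, b, ha0, hXeq, ?_⟩
  -- explicit inverse
  have hεa : (ε : ℂ) * a ≠ 0 := mul_ne_zero hεC ha0
  set Y : Matrix (Fin 2) (Fin 2) ℂ := !![a⁻¹, -(b / ((ε:ℂ) * a * a)); 0, ((ε:ℂ) * a)⁻¹] with hY
  have hXY : X * Y = 1 := by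
    rw [hXeq, hY]
    ext i j
    fin_cases i <;> fin_cases j <;>
      simp [Matrix.mul_apply, Fin.sum_univ_two, Matrix.one_apply] <;>
      field_simp <;> ring
  have hXinv : X⁻¹ = Y := Matrix.inv_eq_right_inv hXY
  set f := Matrix.toEuclideanCLM (𝕜 := ℂ) X with hf
  set g := Matrix.toEuclideanCLM (𝕜 := ℂ) X⁻¹ with hg
  have he0 : ‖((WithLp.equiv 2 (Fin 2 → ℂ)).symm ![1, 0] : EuclideanSpace ℂ (Fin 2))‖ = 1 := by
    simp [EuclideanSpace.norm_eq, Fin.sum_univ_two, WithLp.equiv_symm_apply, PiLp.toLp_apply]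
  have he1 : ‖((WithLp.equiv 2 (Fin 2 → ℂ)).symm ![0, 1] : EuclideanSpace ℂ (Fin 2))‖ = 1 := by
    simp [EuclideanSpace.norm_eq, Fin.sum_univ_two, WithLp.equiv_symm_apply, PiLp.toLp_apply]
  have hfA : ‖a‖ ≤ ‖f‖ := by
    have happ : f ((WithLp.equiv 2 (Fin 2 → ℂ)).symm ![1, 0]) =
        (WithLp.equiv 2 (Fin 2 → ℂ)).symm (X *ᵥ ![1, 0]) := rfl
    have hcoord : ((WithLp.equiv 2 (Fin 2 → ℂ)).symm (X *ᵥ ![1, 0]) :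
        EuclideanSpace ℂ (Fin 2)) 0 = a := by
      rw [hXeq]
      simp [WithLp.equiv_symm_apply, PiLp.toLp_apply, Matrix.mulVec, dotProduct, Fin.sum_univ_two]
    calc ‖a‖ = ‖((WithLp.equiv 2 (Fin 2 → ℂ)).symm (X *ᵥ ![1, 0]) :
          EuclideanSpace ℂ (Fin 2)) 0‖ := by rw [hcoord]
      _ ≤ ‖((WithLp.equiv 2 (Fin 2 → ℂ)).symm (X *ᵥ ![1, 0]) : EuclideanSpace ℂ (Fin 2))‖ :=
          coord_le_norm _ 0
      _ = ‖f ((WithLp.equiv 2 (Fin 2 → ℂ)).symm ![1, 0])‖ := by rw [happ]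
      _ ≤ ‖f‖ * ‖((WithLp.equiv 2 (Fin 2 → ℂ)).symm ![1, 0] : EuclideanSpace ℂ (Fin 2))‖ :=
          f.le_opNorm _
      _ = ‖f‖ := by rw [he0, mul_one]
  have hgB : ‖((ε:ℂ) * a)⁻¹‖ ≤ ‖g‖ := by
    have happ : g ((WithLp.equiv 2 (Fin 2 → ℂ)).symm ![0, 1]) =
        (WithLp.equiv 2 (Fin 2 → ℂ)).symm (X⁻¹ *ᵥ ![0, 1]) := rfl
    have hcoord : ((WithLp.equiv 2 (Fin 2 → ℂ)).symm (X⁻¹ *ᵥ ![0, 1]) :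
        EuclideanSpace ℂ (Fin 2)) 1 = ((ε:ℂ) * a)⁻¹ := by
      rw [hXinv, hY]
      simp [WithLp.equiv_symm_apply, PiLp.toLp_apply, Matrix.mulVec, dotProduct, Fin.sum_univ_two]
    calc ‖((ε:ℂ) * a)⁻¹‖ = ‖((WithLp.equiv 2 (Fin 2 → ℂ)).symm (X⁻¹ *ᵥ ![0, 1]) :
          EuclideanSpace ℂ (Fin 2)) 1‖ := by rw [hcoord]
      _ ≤ ‖((WithLp.equiv 2 (Fin 2 → ℂ)).symm (X⁻¹ *ᵥ ![0, 1]) : EuclideanSpace ℂ (Fin 2))‖ :=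
          coord_le_norm _ 1
      _ = ‖g ((WithLp.equiv 2 (Fin 2 → ℂ)).symm ![0, 1])‖ := by rw [happ]
      _ ≤ ‖g‖ * ‖((WithLp.equiv 2 (Fin 2 → ℂ)).symm ![0, 1] : EuclideanSpace ℂ (Fin 2))‖ :=
          g.le_opNorm _
      _ = ‖g‖ := by rw [he1, mul_one]
  have hna : 0 < ‖a‖ := norm_pos_iff.mpr ha0
  have hkey : 1 / ε = ‖a‖ * ‖((ε:ℂ) * a)⁻¹‖ := by
    rw [norm_inv, norm_mul, Complex.norm_real, Real.norm_of_nonneg hε0.le]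
    field_simp
  rw [hkey]
  exact mul_le_mul hfA hgB (norm_nonneg _) (norm_nonneg _)
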